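/- Let B be a binomial random variable with parameters n ∈ ℕ and p ∈ (0,1). Then for every real k with 0 < k < np, P(B ≤ k) ≤ exp( k·(1 + log(np/k) - np/k) ). -/

import Mathlib

theorem binomial_lower_tail_chernoff (n : ℕ) (p : ℝ) (hp0 : 0 < p) (hp1 : p < 1)
    (k : ℝ) (hk0 : 0 < k) (hk : k < (n : ℝ) * p) :
    (∑ i ∈ Finset.range (n + 1),
        if (i : ℝ) ≤ k then (n.choose i : ℝ) * p ^ i * (1 - p) ^ (n - i) else 0)
      ≤ Real.exp (k * (1 + Real.log ((n : ℝ) * p / k) - (n : ℝ) * p / k)) := by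
  set N : ℝ := (n : ℝ) * p with hN
  have hN0 : 0 < N := hk0.trans hk
  set r : ℝ := k / N with hrdef
  have hr0 : 0 < r := div_pos hk0 hN0
  have hr1 : r < 1 := (div_lt_one hN0).2 hk
  have hq : (0:ℝ) ≤ 1 - p := by linarith
  have hcnonneg : ∀ i, 0 ≤ (n.choose i : ℝ) * p ^ i * (1 - p) ^ (n - i) := by
    intro i; positivity
  have h1 : ∀ i ∈ Finset.range (n+1),
      (if (i : ℝ) ≤ k then (n.choose i : ℝ) * p ^ i * (1 - p) ^ (n - i) else 0)
      ≤ r ^ (-k) * ((n.choose i : ℝ) * (p * r) ^ i * (1 - p) ^ (n - i)) := by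
    intro i _
    split_ifs with h
    · have hge : (1:ℝ) ≤ r ^ ((i : ℝ) - k) :=
        Real.one_le_rpow_of_pos_of_le_one_of_nonpos hr0 hr1.le (by linarith)
      have heq : r ^ ((i:ℝ) - k) = r ^ (-k) * r ^ i := by
        rw [show (i:ℝ) - k = -k + (i:ℝ) by ring, Real.rpow_add hr0, Real.rpow_natCast]
      calc (n.choose i : ℝ) * p ^ i * (1 - p) ^ (n - i)
          = 1 * ((n.choose i : ℝ) * p ^ i * (1 - p) ^ (n - i)) := by ring
        _ ≤ (r ^ (-k) * r ^ i) * ((n.choose i : ℝ) * p ^ i * (1 - p) ^ (n - i)) := by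
            apply mul_le_mul_of_nonneg_right _ (hcnonneg i)
            rw [← heq]; exact hge
        _ = r ^ (-k) * ((n.choose i : ℝ) * (p * r) ^ i * (1 - p) ^ (n - i)) := by
            rw [mul_pow]; ring
    · positivity
  have h2 := Finset.sum_le_sum h1
  rw [← Finset.mul_sum] at h2
  have h3 : ∑ i ∈ Finset.range (n+1), (n.choose i : ℝ) * (p * r) ^ i * (1 - p) ^ (n - i)
      = (p * r + (1 - p)) ^ n := by
    rw [add_pow]
    exact Finset.sum_congr rfl fun i _ => by ring
  rw [h3] at h2
  have hbase : (0:ℝ) ≤ p * r + (1 - p) := by nlinarith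
  have h4 : (p * r + (1 - p)) ^ n ≤ Real.exp ((n:ℝ) * (p * (r - 1))) := by
    have h5 : p * r + (1 - p) ≤ Real.exp (p * (r - 1)) := by
      have := Real.add_one_le_exp (p * (r - 1))
      linarith
    calc (p * r + (1 - p)) ^ n ≤ (Real.exp (p * (r - 1))) ^ n :=
          pow_le_pow_left₀ hbase h5 n
      _ = Real.exp ((n:ℝ) * (p * (r - 1))) := by
          rw [← Real.exp_nat_mul]
  have h6 : r ^ (-k) * (p * r + (1 - p)) ^ n
      ≤ r ^ (-k) * Real.exp ((n:ℝ) * (p * (r - 1))) := by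
    apply mul_le_mul_of_nonneg_left h4 (Real.rpow_nonneg hr0.le _)
  have h7 : r ^ (-k) * Real.exp ((n:ℝ) * (p * (r - 1)))
      = Real.exp (k * (1 + Real.log (N / k) - N / k)) := by
    rw [Real.rpow_def_of_pos hr0, ← Real.exp_add]
    congr 1
    have hNr : N * r = k := by rw [hrdef]; field_simp
    have hNk : k * (N / k) = N := by field_simp [hk0.ne']
    have hlog : Real.log (N / k) = - Real.log r := by
      rw [hrdef, ← Real.log_inv, inv_div]
    have hnp : (n:ℝ) * (p * (r - 1)) = N * r - N := by rw [hN]; ring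
    rw [hlog, hnp, hNr]
    nlinarith [hNk]
  calc _ ≤ r ^ (-k) * (p * r + (1 - p)) ^ n := h2
    _ ≤ r ^ (-k) * Real.exp ((n:ℝ) * (p * (r - 1))) := h6
    _ = Real.exp (k * (1 + Real.log (N / k) - N / k)) := h7
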